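/- arXiv:2103.12711 — 5 statements merged into one kernel-verified Lean document; each statement's English description precedes it below -/
import Mathlib

section
/- Let p ≥ 1 and let D assign to every probability measure ρ on ℝ^d a measurable function D_ρ : ℝ^d → [0,1] satisfying affine invariance: D_{g♯ρ}(g(x)) = D_ρ(x) for every map g(x) = Ax + b with A ∈ ℝ^{d×d} invertible and b ∈ ℝ^d, every x ∈ ℝ^d and every probability measure ρ, where g♯ρ is the pushforward of ρ by g. Then for every such g and all probability measures μ, ν on ℝ^d, DD_p(g♯μ, g♯ν) = |det A|^{1/p} · DD_p(μ, ν). -/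
open MeasureTheory
open scoped ENNReal

/-- The data-depth discrepancy `DD_p` between two depth functions, with values in `[0, ∞]`. -/
noncomputable def DDp (d : ℕ) (p : ℝ)
    (f g : EuclideanSpace ℝ (Fin d) → ℝ) : ℝ≥0∞ :=
  (∫⁻ z, ENNReal.ofReal (|f z - g z| ^ p)) ^ (1 / p)

/-- The affine map `x ↦ A x + b` on `ℝ^d` given by a matrix `A` and a vector `b`. -/
noncomputable def affMap (d : ℕ) (A : Matrix (Fin d) (Fin d) ℝ)
    (b : EuclideanSpace ℝ (Fin d)) : EuclideanSpace ℝ (Fin d) → EuclideanSpace ℝ (Fin d) :=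
  fun x => Matrix.toEuclideanLin A x + b

theorem stmt_3 (d : ℕ) (p : ℝ) (hp : 1 ≤ p)
    (D : Measure (EuclideanSpace ℝ (Fin d)) → (EuclideanSpace ℝ (Fin d) → ℝ))
    (hDmeas : ∀ ρ : Measure (EuclideanSpace ℝ (Fin d)),
      IsProbabilityMeasure ρ → Measurable (D ρ))
    (hDrange : ∀ ρ : Measure (EuclideanSpace ℝ (Fin d)),
      IsProbabilityMeasure ρ → ∀ x, D ρ x ∈ Set.Icc (0 : ℝ) 1)
    -- affine invariance of the depth
    (hAff : ∀ (A : Matrix (Fin d) (Fin d) ℝ), IsUnit A →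
      ∀ b : EuclideanSpace ℝ (Fin d),
      ∀ ρ : Measure (EuclideanSpace ℝ (Fin d)), IsProbabilityMeasure ρ →
      ∀ x : EuclideanSpace ℝ (Fin d),
        D (Measure.map (affMap d A b) ρ) (affMap d A b x) = D ρ x)
    (A : Matrix (Fin d) (Fin d) ℝ) (hA : IsUnit A) (b : EuclideanSpace ℝ (Fin d))
    (μ ν : Measure (EuclideanSpace ℝ (Fin d)))
    (hμ : IsProbabilityMeasure μ) (hν : IsProbabilityMeasure ν) :
    DDp d p (D (Measure.map (affMap d A b) μ)) (D (Measure.map (affMap d A b) ν)) =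
      ENNReal.ofReal (|A.det| ^ (1 / p)) * DDp d p (D μ) (D ν) := by
  have hdet : A.det ≠ 0 := ((Matrix.isUnit_iff_isUnit_det A).mp hA).ne_zero
  have habs : (0 : ℝ) < |A.det| := abs_pos.mpr hdet
  set L := Matrix.toEuclideanLin A with hL
  have hLdet : LinearMap.det (L : EuclideanSpace ℝ (Fin d) →ₗ[ℝ] EuclideanSpace ℝ (Fin d))
      = A.det := by
    rw [hL, Matrix.toEuclideanLin_eq_toLin, LinearMap.det_toLin]
  have hLc : Continuous L := L.continuous_of_finiteDimensional
  have hgmeas : Measurable (affMap d A b) := by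
    have : affMap d A b = fun x => L x + b := rfl
    rw [this]
    exact hLc.measurable.add_const b
  -- the pushforward measures are probability measures
  have hμ' : IsProbabilityMeasure (Measure.map (affMap d A b) μ) :=
    Measure.isProbabilityMeasure_map hgmeas.aemeasurable
  have hν' : IsProbabilityMeasure (Measure.map (affMap d A b) ν) :=
    Measure.isProbabilityMeasure_map hgmeas.aemeasurable
  -- pushforward of Lebesgue measure
  have hmap : Measure.map (affMap d A b) (volume : Measure (EuclideanSpace ℝ (Fin d)))
      = ENNReal.ofReal |(A.det)⁻¹| • volume := by
    have hcomp : affMap d A b = (fun y => y + b) ∘ L := rfl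
    rw [hcomp, ← Measure.map_map (measurable_add_const b) hLc.measurable]
    rw [Measure.map_linearMap_addHaar_eq_smul_addHaar volume (by rw [hLdet]; exact hdet),
      hLdet, Measure.map_smul, map_add_right_eq_self volume b]
  -- measurability of the integrand on the image side
  have hFmeas : Measurable (fun z =>
      ENNReal.ofReal (|D (Measure.map (affMap d A b) μ) z - D (Measure.map (affMap d A b) ν) z| ^ p)) :=
    by have h1 := hDmeas _ hμ'; have h2 := hDmeas _ hν'; fun_prop
  -- change of variables for the lintegral
  have key : (∫⁻ z, ENNReal.ofReal
        (|D (Measure.map (affMap d A b) μ) z - D (Measure.map (affMap d A b) ν) z| ^ p))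
      = ENNReal.ofReal |A.det| *
        ∫⁻ x, ENNReal.ofReal (|D μ x - D ν x| ^ p) := by
    have h1 : (∫⁻ x, ENNReal.ofReal (|D μ x - D ν x| ^ p))
        = ∫⁻ x, ENNReal.ofReal
            (|D (Measure.map (affMap d A b) μ) (affMap d A b x)
              - D (Measure.map (affMap d A b) ν) (affMap d A b x)| ^ p) := by
      refine lintegral_congr fun x => ?_
      rw [hAff A hA b μ hμ x, hAff A hA b ν hν x]
    rw [h1, ← lintegral_map hFmeas hgmeas, hmap, lintegral_smul_measure, smul_eq_mul, ← mul_assoc,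
      abs_inv, ENNReal.ofReal_inv_of_pos habs,
      ENNReal.mul_inv_cancel (by simpa using habs.le.lt_of_ne' (by simpa using habs.ne'))
        ENNReal.ofReal_ne_top, one_mul]
  -- put everything together
  have hp0 : (0 : ℝ) ≤ 1 / p := by positivity
  rw [DDp, DDp, key, ENNReal.mul_rpow_of_nonneg _ _ hp0,
    ENNReal.ofReal_rpow_of_pos habs]
end

section
/- Let p ≥ 1, ε ≥ 0, and let D assign to every probability measure ρ on ℝ^d a depth function D_ρ : ℝ^d → [0,1] satisfying affine invariance: D_{g♯ρ}(g(x)) = D_ρ(x) for every map g(x) = Ax + b with A invertible, every x, and every ρ. Let μ, ν be probability measures on ℝ^d such that, with α* = min(sup_x D_μ(x), sup_x D_ν(x)) > ε, the regions D_μ^α = {x : D_μ(x) ≥ α} and D_ν^α are nonempty compact for every α ∈ [ε, α*]. If g(x) = Ax + b with A A^T = I_d (A orthogonal), then DR_{p,ε}(g♯μ, g♯ν) = DR_{p,ε}(μ, ν). -/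
open MeasureTheory

/-- `α* = min(sup_x f(x), sup_x g(x))`, the smallest of the two maximal depths. -/
noncomputable def alphaStar (d : ℕ) (f g : EuclideanSpace ℝ (Fin d) → ℝ) : ℝ :=
  min (⨆ x, f x) (⨆ x, g x)

/-- The depth-region discrepancy
`DR_{p,ε}(f,g) = ((1/(α*-ε)) ∫_ε^{α*} d_H({f ≥ α}, {g ≥ α})^p dα)^{1/p}`. -/
noncomputable def DRpe (d : ℕ) (p ε : ℝ)
    (f g : EuclideanSpace ℝ (Fin d) → ℝ) : ℝ :=
  ((alphaStar d f g - ε)⁻¹ * ∫ α in ε..(alphaStar d f g),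
    (Metric.hausdorffDist {x | α ≤ f x} {x | α ≤ g x}) ^ p) ^ (1 / p)

/-- An orthogonal matrix together with a translation gives an isometry of `ℝ^d`. -/
lemma affMap_isometry (d : ℕ) (A : Matrix (Fin d) (Fin d) ℝ) (hA : A * A.transpose = 1)
    (b : EuclideanSpace ℝ (Fin d)) : Isometry (affMap d A b) := by
  have hAtA : A.transpose * A = 1 := mul_eq_one_comm.mp hA
  have hadj : Matrix.toEuclideanLin A.transpose =
      LinearMap.adjoint (Matrix.toEuclideanLin A) := by
    simpa using Matrix.toEuclideanLin_conjTranspose_eq_adjoint A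
  have hnorm : ∀ w : EuclideanSpace ℝ (Fin d), ‖Matrix.toEuclideanLin A w‖ = ‖w‖ := by
    intro w
    have hinner : inner ℝ (Matrix.toEuclideanLin A w) (Matrix.toEuclideanLin A w) =
        (inner ℝ w w : ℝ) := by
      rw [← LinearMap.adjoint_inner_left, ← hadj]
      have : Matrix.toEuclideanLin A.transpose (Matrix.toEuclideanLin A w) = w := by
        simp [Matrix.toEuclideanLin_apply, Matrix.mulVec_mulVec, hAtA]
      rw [this]
    rw [real_inner_self_eq_norm_sq, real_inner_self_eq_norm_sq] at hinner
    have := congrArg Real.sqrt hinner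
    rwa [Real.sqrt_sq (norm_nonneg _), Real.sqrt_sq (norm_nonneg _)] at this
  refine Isometry.of_dist_eq fun x y => ?_
  simp only [affMap, dist_eq_norm, add_sub_add_right_eq_sub, ← map_sub]
  exact hnorm _

/-- The affine map of an orthogonal matrix is surjective. -/
lemma affMap_surjective (d : ℕ) (A : Matrix (Fin d) (Fin d) ℝ) (hA : A * A.transpose = 1)
    (b : EuclideanSpace ℝ (Fin d)) : Function.Surjective (affMap d A b) := by
  intro y
  refine ⟨Matrix.toEuclideanLin A.transpose (y - b), ?_⟩
  have : Matrix.toEuclideanLin A (Matrix.toEuclideanLin A.transpose (y - b)) = y - b := by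
    simp [Matrix.toEuclideanLin_apply, Matrix.mulVec_mulVec, hA]
  show Matrix.toEuclideanLin A (Matrix.toEuclideanLin A.transpose (y - b)) + b = y
  rw [this, sub_add_cancel]

theorem stmt_4 (d : ℕ) (p ε : ℝ) (hp : 1 ≤ p) (hε : 0 ≤ ε)
    (D : Measure (EuclideanSpace ℝ (Fin d)) → (EuclideanSpace ℝ (Fin d) → ℝ))
    (hDrange : ∀ ρ : Measure (EuclideanSpace ℝ (Fin d)),
      IsProbabilityMeasure ρ → ∀ x, D ρ x ∈ Set.Icc (0 : ℝ) 1)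
    -- affine invariance of the depth
    (hAff : ∀ (A : Matrix (Fin d) (Fin d) ℝ), IsUnit A →
      ∀ b : EuclideanSpace ℝ (Fin d),
      ∀ ρ : Measure (EuclideanSpace ℝ (Fin d)), IsProbabilityMeasure ρ →
      ∀ x : EuclideanSpace ℝ (Fin d),
        D (Measure.map (affMap d A b) ρ) (affMap d A b x) = D ρ x)
    (μ ν : Measure (EuclideanSpace ℝ (Fin d)))
    (hμ : IsProbabilityMeasure μ) (hν : IsProbabilityMeasure ν)
    (hεα : ε < alphaStar d (D μ) (D ν))
    (hreg : ∀ α ∈ Set.Icc ε (alphaStar d (D μ) (D ν)),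
      ({x | α ≤ D μ x}.Nonempty ∧ IsCompact {x | α ≤ D μ x}) ∧
      ({x | α ≤ D ν x}.Nonempty ∧ IsCompact {x | α ≤ D ν x}))
    (A : Matrix (Fin d) (Fin d) ℝ) (hA : A * A.transpose = 1)
    (b : EuclideanSpace ℝ (Fin d)) :
    DRpe d p ε (D (Measure.map (affMap d A b) μ)) (D (Measure.map (affMap d A b) ν)) =
      DRpe d p ε (D μ) (D ν) := by
  have hAu : IsUnit A := @isUnit_of_invertible _ _ A (invertibleOfRightInverse A A.transpose hA)
  have hsurj := affMap_surjective d A hA b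
  have hiso := affMap_isometry d A hA b
  -- level sets of the transformed depths are images of the original level sets
  have hset : ∀ (ρ : Measure (EuclideanSpace ℝ (Fin d))), IsProbabilityMeasure ρ → ∀ α : ℝ,
      {x | α ≤ D (Measure.map (affMap d A b) ρ) x} = affMap d A b '' {x | α ≤ D ρ x} := by
    intro ρ hρ α
    ext y
    constructor
    · intro hy
      obtain ⟨x, rfl⟩ := hsurj y
      exact ⟨x, by rwa [Set.mem_setOf_eq, hAff A hAu b ρ hρ x] at hy, rfl⟩
    · rintro ⟨x, hx, rfl⟩
      show α ≤ D (Measure.map (affMap d A b) ρ) (affMap d A b x)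
      rw [hAff A hAu b ρ hρ x]; exact hx
  -- the suprema are preserved
  have hsup : ∀ (ρ : Measure (EuclideanSpace ℝ (Fin d))), IsProbabilityMeasure ρ →
      (⨆ y, D (Measure.map (affMap d A b) ρ) y) = ⨆ x, D ρ x := by
    intro ρ hρ
    rw [← hsurj.iSup_comp (g := D (Measure.map (affMap d A b) ρ))]
    exact iSup_congr (hAff A hAu b ρ hρ)
  have hAst : alphaStar d (D (Measure.map (affMap d A b) μ)) (D (Measure.map (affMap d A b) ν))
      = alphaStar d (D μ) (D ν) := by
    unfold alphaStar
    rw [hsup μ hμ, hsup ν hν]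
  have hHd : ∀ α : ℝ,
      Metric.hausdorffDist {x | α ≤ D (Measure.map (affMap d A b) μ) x}
        {x | α ≤ D (Measure.map (affMap d A b) ν) x}
      = Metric.hausdorffDist {x | α ≤ D μ x} {x | α ≤ D ν x} := by
    intro α
    rw [hset μ hμ α, hset ν hν α, Metric.hausdorffDist_image hiso]
  unfold DRpe
  rw [hAst]
  simp only [hHd]
end

section
/- Let p ≥ 1, ε > 0, let μ be a probability measure on ℝ^d, X_1, X_2, … i.i.d. with law μ, and μ̂_n the empirical measures. Let D assign to every probability measure ρ on ℝ^d a depth function D_ρ : ℝ^d → [0,1] whose regions D_ρ^α are nonempty compact for α ∈ (0, α_max(ρ)]. Assume: (i) almost surely, sup_{x ∈ ℝ^d} |D_{μ̂_n}(x) − D_μ(x)| → 0; (ii) D is strictly monotone for μ, i.e., for every α ∈ (0, α_max(μ)), D_μ^α equals the closure of {x : D_μ(x) > α}, so that the map α ↦ D_μ^α is continuous on [ε, α_max(μ)] with respect to the Hausdorff distance; (iii) almost surely, sup_{α ∈ (0, α_max(μ)]} d_H(D_{μ̂_n}^α, D_μ^α) → 0. Then DR_{p,ε}(μ̂_n, μ)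 → 0 almost surely. -/
open MeasureTheory Filter
open scoped ENNReal

/-- The empirical measure `μ̂_n = (1/n) ∑_{i<n} δ_{X_i(ω)}`. -/
noncomputable def empMeas {Ω : Type*} (d : ℕ)
    (X : ℕ → Ω → EuclideanSpace ℝ (Fin d)) (n : ℕ) (ω : Ω) :
    Measure (EuclideanSpace ℝ (Fin d)) :=
  (n : ℝ≥0∞)⁻¹ • ∑ i ∈ Finset.range n, Measure.dirac (X i ω)

open Metric Set


lemma hd_sandwich {X : Type*} [MetricSpace X] {A B C E : Set X}
    (hC : C.Nonempty) (hEne : E.Nonempty) (hEb : Bornology.IsBounded E)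
    (hCA : C ⊆ A) (hAE : A ⊆ E) (hCB : C ⊆ B) (hBE : B ⊆ E) :
    hausdorffDist A B ≤ hausdorffDist C E := by
  have hCb : Bornology.IsBounded C := hEb.subset (hCA.trans hAE)
  have hne : EMetric.hausdorffEdist C E ≠ ⊤ :=
    hausdorffEdist_ne_top_of_nonempty_of_bounded hC hEne hCb hEb
  have hed : EMetric.hausdorffEdist A B ≤ EMetric.hausdorffEdist C E := by
    apply EMetric.hausdorffEdist_le_of_infEdist
    · intro x hx
      calc EMetric.infEdist x B ≤ EMetric.infEdist x C := EMetric.infEdist_anti hCB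
        _ ≤ EMetric.hausdorffEdist E C := EMetric.infEdist_le_hausdorffEdist_of_mem (hAE hx)
        _ = EMetric.hausdorffEdist C E := EMetric.hausdorffEdist_comm
    · intro x hx
      calc EMetric.infEdist x A ≤ EMetric.infEdist x C := EMetric.infEdist_anti hCA
        _ ≤ EMetric.hausdorffEdist E C := EMetric.infEdist_le_hausdorffEdist_of_mem (hBE hx)
        _ = EMetric.hausdorffEdist C E := EMetric.hausdorffEdist_comm
  exact ENNReal.toReal_mono hne hed

lemma unif_cont {X : Type*} [MetricSpace X] {g : X → ℝ} {ε M γ : ℝ}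
    (hγ : 0 < γ) (hεM : ε < M)
    (hne : ∀ β ∈ Icc ε M, {x | β ≤ g x}.Nonempty ∧ Bornology.IsBounded {x | β ≤ g x})
    (hcont : ∀ α ∈ Icc ε M, ∀ δ > (0:ℝ), ∃ η > (0:ℝ), ∀ β ∈ Icc ε M, |β - α| < η →
      hausdorffDist {x | β ≤ g x} {x | α ≤ g x} < δ) :
    ∃ η > (0:ℝ), ∀ β ∈ Icc ε M, ∀ β' ∈ Icc ε M, |β - β'| < η →
      hausdorffDist {x | β ≤ g x} {x | β' ≤ g x} < 2 * γ := by
  classical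
  set B : ℝ → Set X := fun β => {x | β ≤ g x} with hB
  have key : ∀ α : Icc ε M, ∃ η > (0:ℝ), ∀ β ∈ Icc ε M, |β - (α:ℝ)| < η →
      hausdorffDist (B β) (B α) < γ := fun α => hcont α α.2 γ hγ
  choose ηf hηf hprop using key
  have hcover : Icc ε M ⊆ ⋃ α : Icc ε M, ball (α:ℝ) (ηf α / 2) := by
    intro β hβ
    exact mem_iUnion.2 ⟨⟨β, hβ⟩, by simp [mem_ball, half_pos (hηf ⟨β, hβ⟩)]⟩
  obtain ⟨t, ht⟩ := isCompact_Icc.elim_finite_subcover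
    (fun α : Icc ε M => ball (α:ℝ) (ηf α / 2)) (fun _ => isOpen_ball) hcover
  have htne : t.Nonempty := by
    by_contra h
    rw [Finset.not_nonempty_iff_eq_empty] at h
    have := ht (left_mem_Icc.2 hεM.le)
    simp [h] at this
  set η : ℝ := t.inf' htne (fun α => ηf α / 2) with hη
  have hηpos : 0 < η := by
    rw [hη, Finset.lt_inf'_iff]
    exact fun α _ => half_pos (hηf α)
  refine ⟨η, hηpos, fun β hβ β' hβ' hd => ?_⟩
  obtain ⟨α, hαt, hβα⟩ := by
    have := ht hβ
    simpa only [mem_iUnion, exists_prop] using this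
  rw [mem_ball, Real.dist_eq] at hβα
  have h1 : |β - (α:ℝ)| < ηf α := lt_of_lt_of_le hβα (by linarith [hηf α])
  have hηle : η ≤ ηf α / 2 := Finset.inf'_le _ hαt
  have h2 : |β' - (α:ℝ)| < ηf α := by
    have h3 : |β' - (α:ℝ)| ≤ |β' - β| + |β - (α:ℝ)| := by
      have := abs_sub_le β' β (α:ℝ); linarith [this]
    have : |β' - β| < η := by rwa [abs_sub_comm]
    linarith
  have d1 : hausdorffDist (B β) (B α) < γ := hprop α β hβ h1
  have d2 : hausdorffDist (B β') (B α) < γ := hprop α β' hβ' h2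
  have hfin : EMetric.hausdorffEdist (B β) (B α) ≠ ⊤ := by
    obtain ⟨n1, b1⟩ := hne β hβ
    obtain ⟨n2, b2⟩ := hne (α:ℝ) α.2
    exact hausdorffEdist_ne_top_of_nonempty_of_bounded n1 n2 b1 b2
  calc hausdorffDist (B β) (B β')
      ≤ hausdorffDist (B β) (B α) + hausdorffDist (B α) (B β') :=
        hausdorffDist_triangle hfin
    _ < γ + γ := by
        have hc : hausdorffDist (B ↑α) (B β') = hausdorffDist (B β') (B ↑α) :=
          hausdorffDist_comm
        linarith
    _ = 2 * γ := by ring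

lemma arith_fin (L θ Rp γ' : ℝ) (hL : 0 < L) (hθpos : 0 < θ) (hRp0 : 0 ≤ Rp)
    (hγ' : 0 < γ') (hθγ : θ ≤ γ' * L / (8*(Rp+1))) :
    (2/L) * (θ*Rp + γ'/4*L + θ*Rp) < γ' := by
  have h8 : θ * (8*(Rp+1)) ≤ γ' * L := (le_div_iff₀ (by positivity)).1 hθγ
  have h8' : 8*(θ*Rp) + 8*θ ≤ γ' * L := by nlinarith
  rw [div_mul_eq_mul_div, div_lt_iff₀ hL]
  nlinarith


lemma empMeas_prob {Ω : Type*} (d : ℕ)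
    (X : ℕ → Ω → EuclideanSpace ℝ (Fin d)) (n : ℕ) (ω : Ω) (hn : 1 ≤ n) :
    IsProbabilityMeasure (empMeas d X n ω) := by
  constructor
  have hn0 : (n : ℝ≥0∞) ≠ 0 := by exact_mod_cast Nat.one_le_iff_ne_zero.1 hn
  simp [empMeas, Measure.smul_apply, Measure.coe_finset_sum, Finset.sum_apply,
    measure_univ, smul_eq_mul, ENNReal.inv_mul_cancel hn0 (ENNReal.natCast_ne_top n)]

section Key

variable {d : ℕ}

local notation "E" => EuclideanSpace ℝ (Fin d)

lemma key (p ε : ℝ) (hp : 1 ≤ p) (hε : 0 < ε)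
    (g : E → ℝ) (f : ℕ → E → ℝ)
    (hg01 : ∀ x, g x ∈ Icc (0:ℝ) 1)
    (hf01 : ∀ᶠ n in atTop, ∀ x, f n x ∈ Icc (0:ℝ) 1)
    (hBreg : ∀ α ∈ Ioc (0:ℝ) (⨆ x, g x),
      {x | α ≤ g x}.Nonempty ∧ IsCompact {x | α ≤ g x})
    (hAreg : ∀ᶠ n in atTop, ∀ α ∈ Ioc (0:ℝ) (⨆ x, f n x),
      {x | α ≤ f n x}.Nonempty ∧ IsCompact {x | α ≤ f n x})
    (hconv : Tendsto (fun n => ⨆ x, |f n x - g x|) atTop (nhds 0))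
    (hcont : ∀ α ∈ Icc ε (⨆ x, g x), ∀ δ > (0 : ℝ), ∃ η > (0 : ℝ),
      ∀ β ∈ Icc ε (⨆ x, g x), |β - α| < η →
        hausdorffDist {x | β ≤ g x} {x | α ≤ g x} < δ) :
    Tendsto (fun n => DRpe d p ε (f n) g) atTop (nhds 0) := by
  classical
  have hp0 : (0:ℝ) < p := lt_of_lt_of_le one_pos hp
  have hp0' : p ≠ 0 := ne_of_gt hp0
  have h1p : (0:ℝ) < 1 / p := by positivity
  set M : ℝ := ⨆ x, g x with hM
  have hgbdd : BddAbove (range g) := ⟨1, by rintro _ ⟨x, rfl⟩; exact (hg01 x).2⟩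
  by_cases hML : M ≤ ε
  · -- degenerate case: everything is eventually 0
    have hev : ∀ᶠ n in atTop, DRpe d p ε (f n) g = 0 := by
      filter_upwards [hf01] with n hf
      have hfbdd : BddAbove (range (f n)) := ⟨1, by rintro _ ⟨x, rfl⟩; exact (hf x).2⟩
      have hb : alphaStar d (f n) g ≤ ε := le_trans (min_le_right _ _) hML
      have hint : (∫ α in ε..(alphaStar d (f n) g),
          (hausdorffDist {x | α ≤ f n x} {x | α ≤ g x}) ^ p) = 0 := by
        rw [intervalIntegral.integral_congr_ae (g := fun _ => (0:ℝ))
          (ae_of_all _ ?_), intervalIntegral.integral_zero]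
        intro α hα
        have hbα : alphaStar d (f n) g < α := by
          rcases Set.mem_uIoc.1 hα with h | h
          · exact absurd (h.2.trans hb) (not_le.2 h.1)
          · exact h.1
        rcases min_lt_iff.1 hbα with h | h
        · have hem : {x | α ≤ f n x} = (∅ : Set E) := by
            apply eq_empty_iff_forall_notMem.2
            intro x hx
            exact absurd (le_trans hx (le_ciSup hfbdd x)) (not_le.2 h)
          rw [hem, hausdorffDist_empty']
          exact Real.zero_rpow hp0'
        · have hem : {x | α ≤ g x} = (∅ : Set E) := by
            apply eq_empty_iff_forall_notMem.2
            intro x hx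
            exact absurd (le_trans hx (le_ciSup hgbdd x)) (not_le.2 h)
          rw [hem, hausdorffDist_empty]
          exact Real.zero_rpow hp0'
      rw [DRpe, hint, mul_zero, Real.zero_rpow (ne_of_gt h1p)]
    exact tendsto_const_nhds.congr' (hev.mono fun n h => h.symm)
  · push_neg at hML
    set L : ℝ := M - ε with hLdef
    have hL : 0 < L := by rw [hLdef]; linarith
    have hK := hBreg (ε/2) ⟨by linarith, by linarith⟩
    set K : Set E := {x | ε/2 ≤ g x} with hKdef
    have hKb : Bornology.IsBounded K := hK.2.isBounded
    set R : ℝ := Metric.diam K with hRdef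
    have hR0 : 0 ≤ R := diam_nonneg
    set Rp : ℝ := R ^ p with hRpdef
    have hRp0 : 0 ≤ Rp := Real.rpow_nonneg hR0 p
    suffices hS : Tendsto (fun n => (alphaStar d (f n) g - ε)⁻¹ *
        ∫ α in ε..(alphaStar d (f n) g),
          (hausdorffDist {x | α ≤ f n x} {x | α ≤ g x}) ^ p) atTop (nhds 0) by
      have hc : ContinuousAt (fun x : ℝ => x ^ (1/p)) 0 :=
        Real.continuousAt_rpow_const 0 (1/p) (Or.inr h1p.le)
      have := hc.tendsto.comp hS
      simp only [Function.comp_def, Real.zero_rpow (ne_of_gt h1p)] at this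
      simpa only [DRpe] using this
    set S : ℕ → ℝ := fun n => (alphaStar d (f n) g - ε)⁻¹ *
        ∫ α in ε..(alphaStar d (f n) g),
          (hausdorffDist {x | α ≤ f n x} {x | α ≤ g x}) ^ p with hSdef
    have claim : ∀ γ' > (0:ℝ), ∀ᶠ n in atTop, 0 ≤ S n ∧ S n < γ' := by
      intro γ' hγ'
      set γ : ℝ := (1/2) * (γ'/4) ^ (1/p) with hγdef
      have hγpos : 0 < γ := by
        rw [hγdef]; positivity
      have h2γ : (2*γ) ^ p = γ'/4 := by
        have h24 : 2*γ = (γ'/4) ^ (1/p) := by rw [hγdef]; ring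
        rw [h24, ← Real.rpow_mul (by positivity : (0:ℝ) ≤ γ'/4),
          one_div_mul_cancel hp0', Real.rpow_one]
      have hBne : ∀ β ∈ Icc ε M, {x | β ≤ g x}.Nonempty ∧
          Bornology.IsBounded {x | β ≤ g x} := by
        intro β hβ
        obtain ⟨h1, h2⟩ := hBreg β ⟨lt_of_lt_of_le hε hβ.1, hβ.2⟩
        exact ⟨h1, h2.isBounded⟩
      obtain ⟨η, hη, hUC⟩ := unif_cont hγpos hML hBne hcont
      set θ : ℝ := min (L/4) (γ' * L / (8 * (Rp + 1))) with hθdef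
      have hθpos : 0 < θ := lt_min (by linarith) (by positivity)
      have hθL : θ ≤ L/4 := min_le_left _ _
      have hθγ : θ ≤ γ' * L / (8 * (Rp + 1)) := min_le_right _ _
      set σ : ℝ := min θ (min (η/2) (ε/2)) with hσdef
      have hσpos : 0 < σ := lt_min hθpos (lt_min (by linarith) (by linarith))
      filter_upwards [hconv.eventually (gt_mem_nhds hσpos), hf01, hAreg] with n hδn hf hA
      set δn : ℝ := ⨆ x, |f n x - g x| with hδdef
      have hfbdd : BddAbove (range (f n)) := ⟨1, by rintro _ ⟨x, rfl⟩; exact (hf x).2⟩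
      have hdbdd : BddAbove (range fun x => |f n x - g x|) := by
        refine ⟨2, ?_⟩
        rintro _ ⟨x, rfl⟩
        have h1 := hf x; have h2 := hg01 x
        rw [abs_le]
        constructor <;> [linarith [h1.1, h2.2]; linarith [h1.2, h2.1]]
      have hpt : ∀ x, |f n x - g x| ≤ δn := fun x => le_ciSup hdbdd x
      have hδ0 : 0 ≤ δn := le_trans (abs_nonneg _) (hpt 0)
      have hptl : ∀ x, g x - δn ≤ f n x := by
        intro x; have := abs_le.1 (hpt x); linarith [this.1]
      have hptu : ∀ x, f n x - δn ≤ g x := by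
        intro x; have := abs_le.1 (hpt x); linarith [this.2]
      have hsupf : M - δn ≤ ⨆ x, f n x := by
        have h1 : ∀ x, g x ≤ (⨆ x, f n x) + δn := fun x =>
          le_trans (by linarith [hptl x]) (add_le_add_left (le_ciSup hfbdd x) _)
        have h2 : M ≤ (⨆ x, f n x) + δn := ciSup_le h1
        linarith
      set b : ℝ := alphaStar d (f n) g with hbdef
      have hbM : b ≤ M := min_le_right _ _
      have hbf : b ≤ ⨆ x, f n x := min_le_left _ _
      have hδθ : δn < θ := lt_of_lt_of_le hδn (min_le_left _ _)
      have hδη : δn < η/2 :=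
        lt_of_lt_of_le hδn (le_trans (min_le_right _ _) (min_le_left _ _))
      have hδε : δn < ε/2 :=
        lt_of_lt_of_le hδn (le_trans (min_le_right _ _) (min_le_right _ _))
      have hbge : M - δn ≤ b := le_min (by linarith [hsupf]) (by linarith)
      have hεb : ε < b := by
        have : δn < L/4 := lt_of_lt_of_le hδθ hθL
        have : M - δn > ε := by rw [hLdef] at this; linarith
        linarith [hbge]
      have hbε : L/2 ≤ b - ε := by
        have h1 : δn ≤ L/4 := le_of_lt (lt_of_lt_of_le hδθ hθL)
        have h2 : M - δn ≤ b := hbge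
        rw [hLdef] at h1 ⊢
        linarith
      -- region facts
      have hAfact : ∀ α, ε ≤ α → α ≤ b →
          ({x | α ≤ f n x}.Nonempty ∧ {x | α ≤ f n x} ⊆ K) := by
        intro α h1 h2
        refine ⟨(hA α ⟨lt_of_lt_of_le hε h1, le_trans h2 hbf⟩).1, ?_⟩
        intro x hx
        simp only [mem_setOf_eq] at hx ⊢
        have := hptu x
        rw [hKdef]; simp only [mem_setOf_eq]
        linarith [hδε]
      have hBfact : ∀ α, ε ≤ α → α ≤ b →
          ({x | α ≤ g x}.Nonempty ∧ {x | α ≤ g x} ⊆ K) := by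
        intro α h1 h2
        refine ⟨(hBreg α ⟨lt_of_lt_of_le hε h1, le_trans h2 hbM⟩).1, ?_⟩
        intro x hx
        simp only [mem_setOf_eq] at hx
        rw [hKdef]; simp only [mem_setOf_eq]
        linarith
      have crude : ∀ α ∈ Icc ε b, hausdorffDist {x | α ≤ f n x} {x | α ≤ g x} ≤ R := by
        intro α hα
        obtain ⟨hAne, hAK⟩ := hAfact α hα.1 hα.2
        obtain ⟨hBne2, hBK⟩ := hBfact α hα.1 hα.2
        calc hausdorffDist {x | α ≤ f n x} {x | α ≤ g x}
            ≤ diam ({x | α ≤ f n x} ∪ {x | α ≤ g x}) :=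
              hausdorffDist_le_diam hAne (hKb.subset hAK) hBne2 (hKb.subset hBK)
          _ ≤ diam K := diam_mono (union_subset hAK hBK) hKb
      have hce : ε + θ ≤ M - θ := by
        have : θ ≤ L/4 := hθL
        rw [hLdef] at this; linarith
      have middle : ∀ α ∈ Ioc (ε+θ) (M-θ),
          hausdorffDist {x | α ≤ f n x} {x | α ≤ g x} < 2*γ := by
        intro α hα
        obtain ⟨hα1, hα2⟩ := hα
        have hmem1 : α + δn ∈ Icc ε M := ⟨by linarith, by linarith [hδθ]⟩
        have hmem2 : α - δn ∈ Icc ε M := ⟨by linarith [hδθ], by linarith [hδ0]⟩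
        have hCne := (hBreg (α + δn) ⟨by linarith, hmem1.2⟩).1
        have hEcomp := hBreg (α - δn) ⟨lt_of_lt_of_le hε hmem2.1, hmem2.2⟩
        have hsand : hausdorffDist {x | α ≤ f n x} {x | α ≤ g x} ≤
            hausdorffDist {x | α + δn ≤ g x} {x | α - δn ≤ g x} := by
          apply hd_sandwich hCne hEcomp.1 hEcomp.2.isBounded
          · intro x hx; simp only [mem_setOf_eq] at hx ⊢; linarith [hptl x]
          · intro x hx; simp only [mem_setOf_eq] at hx ⊢; linarith [hptu x]
          · intro x hx; simp only [mem_setOf_eq] at hx ⊢; linarith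
          · intro x hx; simp only [mem_setOf_eq] at hx ⊢; linarith
        have habs : |(α + δn) - (α - δn)| < η := by
          have he : (α + δn) - (α - δn) = 2*δn := by ring
          rw [he, abs_of_nonneg (by linarith)]
          linarith [hδη]
        have hUCa := hUC (α + δn) hmem1 (α - δn) hmem2 habs
        linarith
      -- majorant
      set m : ℝ → ℝ := fun α =>
        Rp + indicator (Ioc (ε+θ) (M-θ)) (fun _ => γ'/4 - Rp) α with hmdef
      have hm_int : ∀ a c : ℝ, IntervalIntegrable m volume a c := by
        intro a c
        apply IntervalIntegrable.add intervalIntegrable_const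
        apply Integrable.intervalIntegrable
        exact (integrable_indicator_iff measurableSet_Ioc).2
          (integrableOn_const measure_Ioc_lt_top.ne)
      have hm_out : ∀ α, α ∉ Ioc (ε+θ) (M-θ) → m α = Rp := by
        intro α h; simp only [hmdef, indicator_of_notMem h, add_zero]
      have hm_in : ∀ α, α ∈ Ioc (ε+θ) (M-θ) → m α = γ'/4 := by
        intro α h; simp only [hmdef, indicator_of_mem h]; ring
      have hFm : ∀ α ∈ Icc ε b,
          (hausdorffDist {x | α ≤ f n x} {x | α ≤ g x}) ^ p ≤ m α := by
        intro α hα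
        by_cases hmid : α ∈ Ioc (ε+θ) (M-θ)
        · rw [hm_in α hmid, ← h2γ]
          exact Real.rpow_le_rpow hausdorffDist_nonneg (le_of_lt (middle α hmid)) hp0.le
        · rw [hm_out α hmid]
          exact Real.rpow_le_rpow hausdorffDist_nonneg (crude α hα) hp0.le
      have hMθb : M - θ ≤ b := by linarith [hbge, hδθ]
      have hsplit : (∫ α in ε..b, m α) =
          (∫ α in ε..(ε+θ), m α) + (∫ α in (ε+θ)..(M-θ), m α) + (∫ α in (M-θ)..b, m α) := by
        rw [intervalIntegral.integral_add_adjacent_intervals (hm_int _ _) (hm_int _ _),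
          intervalIntegral.integral_add_adjacent_intervals (hm_int _ _) (hm_int _ _)]
      have hp1 : (∫ α in ε..(ε+θ), m α) ≤ Rp * θ := by
        have hb1 := intervalIntegral.norm_integral_le_of_norm_le_const
          (a := ε) (b := ε+θ) (C := Rp) (f := m) ?_
        · calc (∫ α in ε..(ε+θ), m α) ≤ ‖∫ α in ε..(ε+θ), m α‖ := le_abs_self _
            _ ≤ Rp * |ε + θ - ε| := hb1
            _ = Rp * θ := by rw [show ε + θ - ε = θ by ring, abs_of_nonneg hθpos.le]
        · intro x hx
          rw [uIoc_of_le (by linarith : ε ≤ ε + θ)] at hx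
          have : x ∉ Ioc (ε+θ) (M-θ) := fun hc => absurd hx.2 (not_le.2 hc.1)
          rw [hm_out x this, Real.norm_eq_abs, abs_of_nonneg hRp0]
      have hp2 : (∫ α in (ε+θ)..(M-θ), m α) ≤ γ'/4 * L := by
        have hb2 := intervalIntegral.norm_integral_le_of_norm_le_const
          (a := ε+θ) (b := M-θ) (C := γ'/4) (f := m) ?_
        · calc (∫ α in (ε+θ)..(M-θ), m α) ≤ ‖∫ α in (ε+θ)..(M-θ), m α‖ := le_abs_self _
            _ ≤ γ'/4 * |M - θ - (ε+θ)| := hb2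
            _ ≤ γ'/4 * L := by
                apply mul_le_mul_of_nonneg_left _ (by linarith : (0:ℝ) ≤ γ'/4)
                rw [abs_of_nonneg (by linarith)]
                rw [hLdef]; linarith
        · intro x hx
          rw [uIoc_of_le hce] at hx
          rw [hm_in x hx, Real.norm_eq_abs, abs_of_nonneg (by linarith)]
      have hp3 : (∫ α in (M-θ)..b, m α) ≤ Rp * θ := by
        have hb3 := intervalIntegral.norm_integral_le_of_norm_le_const
          (a := M-θ) (b := b) (C := Rp) (f := m) ?_
        · calc (∫ α in (M-θ)..b, m α) ≤ ‖∫ α in (M-θ)..b, m α‖ := le_abs_self _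
            _ ≤ Rp * |b - (M-θ)| := hb3
            _ ≤ Rp * θ := by
                apply mul_le_mul_of_nonneg_left _ hRp0
                rw [abs_of_nonneg (by linarith)]
                linarith
        · intro x hx
          rw [uIoc_of_le hMθb] at hx
          have : x ∉ Ioc (ε+θ) (M-θ) := fun hc => absurd hc.2 (not_le.2 hx.1)
          rw [hm_out x this, Real.norm_eq_abs, abs_of_nonneg hRp0]
      have hIm : (∫ α in ε..b, m α) ≤ θ*Rp + γ'/4*L + θ*Rp := by
        rw [hsplit]
        have := add_le_add (add_le_add hp1 hp2) hp3
        linarith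
      have hSn : S n = (b - ε)⁻¹ *
          ∫ α in ε..b, (hausdorffDist {x | α ≤ f n x} {x | α ≤ g x}) ^ p := by
        simp only [hSdef, hbdef]
      rw [hSn]
      clear_value S m b
      by_cases hInt : IntervalIntegrable
          (fun α => (hausdorffDist {x | α ≤ f n x} {x | α ≤ g x}) ^ p) volume ε b
      · have hI0 : 0 ≤ ∫ α in ε..b, (hausdorffDist {x | α ≤ f n x} {x | α ≤ g x}) ^ p :=
          intervalIntegral.integral_nonneg hεb.le
            (fun u _ => Real.rpow_nonneg hausdorffDist_nonneg p)
        have hIle : (∫ α in ε..b, (hausdorffDist {x | α ≤ f n x} {x | α ≤ g x}) ^ p)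
            ≤ ∫ α in ε..b, m α :=
          intervalIntegral.integral_mono_on hεb.le hInt (hm_int _ _) hFm
        have hbinv : (b - ε)⁻¹ ≤ 2/L := by
          have h1 : (0:ℝ) < L/2 := by linarith
          have h2 := inv_anti₀ h1 hbε
          rwa [show (L/2)⁻¹ = 2/L by rw [inv_div]] at h2
        constructor
        · exact mul_nonneg (inv_nonneg.2 (by linarith)) hI0
        · have hle : (b - ε)⁻¹ * (∫ α in ε..b,
              (hausdorffDist {x | α ≤ f n x} {x | α ≤ g x}) ^ p)
              ≤ (2/L) * (θ*Rp + γ'/4*L + θ*Rp) := by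
            apply mul_le_mul hbinv (le_trans hIle hIm) hI0 (by positivity)
          exact lt_of_le_of_lt hle (arith_fin L θ Rp γ' hL hθpos hRp0 hγ' hθγ)
      · rw [intervalIntegral.integral_undef hInt, mul_zero]
        exact ⟨le_refl 0, hγ'⟩
    refine tendsto_order.2 ⟨fun a ha => ?_, fun a ha => ?_⟩
    · exact (claim 1 one_pos).mono fun n hn => lt_of_lt_of_le ha hn.1
    · exact (claim a ha).mono fun n hn => hn.2

end Key

theorem stmt_6 (d : ℕ) (p ε : ℝ) (hp : 1 ≤ p) (hε : 0 < ε)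
    {Ω : Type*} [MeasurableSpace Ω] (P : Measure Ω) [IsProbabilityMeasure P]
    (μ : Measure (EuclideanSpace ℝ (Fin d))) [IsProbabilityMeasure μ]
    (X : ℕ → Ω → EuclideanSpace ℝ (Fin d))
    (hXmeas : ∀ i, Measurable (X i))
    (hXlaw : ∀ i, Measure.map (X i) P = μ)
    (hXindep : ProbabilityTheory.iIndepFun X P)
    (D : Measure (EuclideanSpace ℝ (Fin d)) → (EuclideanSpace ℝ (Fin d) → ℝ))
    (hDrange : ∀ ρ : Measure (EuclideanSpace ℝ (Fin d)),
      IsProbabilityMeasure ρ → ∀ x, D ρ x ∈ Set.Icc (0 : ℝ) 1)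
    -- regions are nonempty compact for `α ∈ (0, α_max(ρ)]`
    (hreg : ∀ ρ : Measure (EuclideanSpace ℝ (Fin d)), IsProbabilityMeasure ρ →
      ∀ α ∈ Set.Ioc (0 : ℝ) (⨆ x, D ρ x),
        {x | α ≤ D ρ x}.Nonempty ∧ IsCompact {x | α ≤ D ρ x})
    -- (i) almost sure uniform convergence of the empirical depth
    (hunif : ∀ᵐ ω ∂P,
      Tendsto (fun n => ⨆ x, |D (empMeas d X n ω) x - D μ x|) atTop (nhds 0))
    -- (ii) strict monotonicity of the depth for μ ...
    (hmono : ∀ α ∈ Set.Ioo (0 : ℝ) (⨆ x, D μ x),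
      {x | α ≤ D μ x} = closure {x | α < D μ x})
    (hcont : ∀ α ∈ Set.Icc ε (⨆ x, D μ x), ∀ δ > (0 : ℝ), ∃ η > (0 : ℝ),
      ∀ β ∈ Set.Icc ε (⨆ x, D μ x), |β - α| < η →
        Metric.hausdorffDist {x | β ≤ D μ x} {x | α ≤ D μ x} < δ)
    -- (iii) almost sure uniform convergence of the depth regions
    (hregconv : ∀ᵐ ω ∂P,
      Tendsto (fun n => ⨆ α ∈ Set.Ioc (0 : ℝ) (⨆ x, D μ x),
        Metric.hausdorffDist {x | α ≤ D (empMeas d X n ω) x} {x | α ≤ D μ x})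
        atTop (nhds 0)) :
    ∀ᵐ ω ∂P,
      Tendsto (fun n => DRpe d p ε (D (empMeas d X n ω)) (D μ)) atTop (nhds 0) := by
  filter_upwards [hunif] with ω hω
  have hprob : ∀ n, 1 ≤ n → IsProbabilityMeasure (empMeas d X n ω) :=
    fun n hn => empMeas_prob d X n ω hn
  refine key p ε hp hε (D μ) (fun n => D (empMeas d X n ω))
    (hDrange μ inferInstance) ?_ (hreg μ inferInstance) ?_ hω hcont
  · filter_upwards [eventually_ge_atTop 1] with n hn
    exact hDrange _ (hprob n hn)
  · filter_upwards [eventually_ge_atTop 1] with n hn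
    exact hreg _ (hprob n hn)
end

section
/- Let p ≥ 1 and let μ, ν be probability measures on ℝ with continuous cumulative distribution functions F, G and generalized inverse (quantile) functions F^{-1}(q) = inf{t : F(t) ≥ q}, G^{-1}(q) = inf{t : G(t) ≥ q}. Then (∫_0^1 |F^{-1}(q) − G^{-1}(q)|^p dq)^{1/p} ≤ (2 ∫_0^{1/2} max(|F^{-1}(1−α) − G^{-1}(1−α)|, |F^{-1}(α) − G^{-1}(α)|)^p dα)^{1/p}. In other words, the p-Wasserstein distance W_p(μ,ν), given in dimension one by the L^p distance of quantile functions, is bounded above by the depth-region discrepancy DR_{p,0}(μ,ν) computed with the halfspace depth, whose Hausdorff distances between the interval depth regions equal the maxima of the endpoint differences. -/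
open MeasureTheory
open scoped ENNReal

theorem stmt_13 (p : ℝ) (hp : 1 ≤ p)
    (μ ν : Measure ℝ) [IsProbabilityMeasure μ] [IsProbabilityMeasure ν]
    (F G : ℝ → ℝ)
    (hF : ∀ t, F t = (μ (Set.Iic t)).toReal)
    (hG : ∀ t, G t = (ν (Set.Iic t)).toReal)
    (hFcont : Continuous F) (hGcont : Continuous G)
    (Finv Ginv : ℝ → ℝ)
    (hFinv : ∀ q, Finv q = sInf {t : ℝ | q ≤ F t})
    (hGinv : ∀ q, Ginv q = sInf {t : ℝ | q ≤ G t}) :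
    (∫⁻ q in Set.Ioo (0 : ℝ) 1, ENNReal.ofReal (|Finv q - Ginv q| ^ p)) ^ (1 / p) ≤
      (2 * ∫⁻ α in Set.Ioo (0 : ℝ) (1 / 2), ENNReal.ofReal
        ((max |Finv (1 - α) - Ginv (1 - α)| |Finv α - Ginv α|) ^ p)) ^ (1 / p) := by
  have hp0 : (0:ℝ) ≤ p := le_trans zero_le_one hp
  set h : ℝ → ℝ≥0∞ := fun q => ENNReal.ofReal (|Finv q - Ginv q| ^ p) with hh
  set m : ℝ → ℝ≥0∞ := fun α => ENNReal.ofReal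
      ((max |Finv (1 - α) - Ginv (1 - α)| |Finv α - Ginv α|) ^ p) with hm
  gcongr
  -- main inequality on lintegrals
  have hsplit : Set.Ioo (0:ℝ) 1 = Set.Ioo (0:ℝ) (1/2) ∪ Set.Ico (1/2:ℝ) 1 := by
    ext x; simp only [Set.mem_Ioo, Set.mem_union, Set.mem_Ico]
    constructor
    · rintro ⟨h0, h1⟩; rcases lt_or_ge x (1/2) with h2 | h2
      · exact Or.inl ⟨h0, h2⟩
      · exact Or.inr ⟨h2, h1⟩
    · rintro (⟨h0, h2⟩ | ⟨h2, h1⟩)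
      · exact ⟨h0, by linarith⟩
      · exact ⟨by linarith, h1⟩
  have hdisj : Disjoint (Set.Ioo (0:ℝ) (1/2)) (Set.Ico (1/2:ℝ) 1) := by
    apply Set.disjoint_left.mpr
    rintro x ⟨_, hx⟩ ⟨hx', _⟩; linarith
  rw [hsplit, lintegral_union measurableSet_Ico hdisj]
  have hle1 : ∫⁻ q in Set.Ioo (0:ℝ) (1/2), h q ≤ ∫⁻ α in Set.Ioo (0:ℝ) (1/2), m α := by
    apply lintegral_mono
    intro q
    apply ENNReal.ofReal_le_ofReal
    exact Real.rpow_le_rpow (abs_nonneg _) (le_max_right _ _) hp0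
  have hle2 : ∫⁻ q in Set.Ico (1/2:ℝ) 1, h q ≤ ∫⁻ α in Set.Ioo (0:ℝ) (1/2), m α := by
    have hmp : MeasurePreserving (fun t : ℝ => 1 - t) volume volume :=
      Measure.measurePreserving_sub_left volume 1
    have hemb : MeasurableEmbedding (fun t : ℝ => 1 - t) := by
      have : (fun t : ℝ => 1 - t) = ((Homeomorph.neg ℝ).trans
          (Homeomorph.addLeft (1:ℝ))) := by
        funext t; simp [sub_eq_add_neg]
      rw [this]
      exact (Homeomorph.measurableEmbedding _)
    have hpre : (fun t : ℝ => 1 - t) ⁻¹' Set.Ico (1/2:ℝ) 1 = Set.Ioc (0:ℝ) (1/2) := by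
      ext x; simp only [Set.mem_preimage, Set.mem_Ico, Set.mem_Ioc]
      constructor <;> rintro ⟨a, b⟩ <;> constructor <;> linarith
    calc ∫⁻ q in Set.Ico (1/2:ℝ) 1, h q
        = ∫⁻ α in Set.Ioc (0:ℝ) (1/2), h (1 - α) := by
          rw [← hmp.setLIntegral_comp_preimage_emb hemb h (Set.Ico (1/2:ℝ) 1), hpre]
      _ = ∫⁻ α in Set.Ioo (0:ℝ) (1/2), h (1 - α) := by
          rw [Measure.restrict_congr_set Ioo_ae_eq_Ioc]
      _ ≤ ∫⁻ α in Set.Ioo (0:ℝ) (1/2), m α := by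
          apply lintegral_mono
          intro α
          apply ENNReal.ofReal_le_ofReal
          exact Real.rpow_le_rpow (abs_nonneg _) (le_max_left _ _) hp0
  calc (∫⁻ q in Set.Ioo (0:ℝ) (1/2), h q) + ∫⁻ q in Set.Ico (1/2:ℝ) 1, h q
      ≤ (∫⁻ α in Set.Ioo (0:ℝ) (1/2), m α) + ∫⁻ α in Set.Ioo (0:ℝ) (1/2), m α :=
        add_le_add hle1 hle2
    _ = 2 * ∫⁻ α in Set.Ioo (0:ℝ) (1/2), m α := (two_mul _).symm
end

section
/- Let μ = N(m, Σ) be the Gaussian measure on ℝ^d with mean m and positive definite covariance Σ, and let α ∈ (0, 1/2]. Then for every u ∈ S^{d−1}, the support function of the halfspace depth region satisfies h_{D_μ^α}(u) = sup{⟨u,x⟩ : x ∈ D_μ^α} = ⟨u,m⟩ + Φ^{-1}(1−α) · √(uᵀΣu), where Φ is the cdf of the standard univariate Gaussian distribution. -/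
open MeasureTheory ProbabilityTheory
open scoped RealInnerProductSpace

/-- The halfspace (Tukey) depth of `x` w.r.t. a measure `ρ` on `ℝ^d`. -/
noncomputable def halfspaceDepth (d : ℕ) (ρ : Measure (EuclideanSpace ℝ (Fin d)))
    (x : EuclideanSpace ℝ (Fin d)) : ℝ :=
  ⨅ u : Metric.sphere (0 : EuclideanSpace ℝ (Fin d)) 1,
    (ρ {y | ⟪(u : EuclideanSpace ℝ (Fin d)), y⟫ ≤ ⟪(u : EuclideanSpace ℝ (Fin d)), x⟫}).toReal

/-- The `α`-depth region of the halfspace depth. -/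
def hdRegion (d : ℕ) (ρ : Measure (EuclideanSpace ℝ (Fin d))) (α : ℝ) :
    Set (EuclideanSpace ℝ (Fin d)) :=
  {x | α ≤ halfspaceDepth d ρ x}

/-- The quadratic form `u ↦ uᵀ Σ u` of a matrix `Σ` on `ℝ^d`. -/
def quadForm (d : ℕ) (S : Matrix (Fin d) (Fin d) ℝ) (u : EuclideanSpace ℝ (Fin d)) : ℝ :=
  dotProduct (fun i => u i) (S.mulVec (fun i => u i))

/-- `Φ`, the cdf of the standard univariate Gaussian distribution. -/
noncomputable def stdGaussianCDF (t : ℝ) : ℝ :=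
  ((gaussianReal 0 1) (Set.Iic t)).toReal

/-- The generalized inverse `Φ⁻¹` of the standard Gaussian cdf. -/
noncomputable def stdGaussianQuantile (q : ℝ) : ℝ :=
  sInf {t : ℝ | q ≤ stdGaussianCDF t}

open Set Filter Topology
open scoped ENNReal

lemma stdGaussianCDF_eq_integral (t : ℝ) :
    stdGaussianCDF t = ∫ x in Set.Iic t, gaussianPDFReal 0 1 x := by
  rw [stdGaussianCDF, gaussianReal_apply_eq_integral 0 one_ne_zero, ENNReal.toReal_ofReal]
  exact setIntegral_nonneg measurableSet_Iic fun x _ => gaussianPDFReal_nonneg 0 1 x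

lemma continuous_stdGaussianCDF : Continuous stdGaussianCDF := by
  have hint : Integrable (gaussianPDFReal 0 1) := integrable_gaussianPDFReal 0 1
  have h := hint.continuous_primitive 0
  have he : stdGaussianCDF = fun t =>
      (∫ x in Set.Iic (0:ℝ), gaussianPDFReal 0 1 x) + ∫ x in (0:ℝ)..t, gaussianPDFReal 0 1 x := by
    funext t
    have := intervalIntegral.integral_Iic_sub_Iic hint.integrableOn hint.integrableOn
      (a := 0) (b := t)
    rw [stdGaussianCDF_eq_integral]
    linarith
  rw [he]
  exact continuous_const.add h

lemma strictMono_stdGaussianCDF : StrictMono stdGaussianCDF := by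
  intro s t hst
  have hunion : Set.Iic s ∪ Set.Ioc s t = Set.Iic t := Set.Iic_union_Ioc_eq_Iic hst.le
  have hdisj : Disjoint (Set.Iic s) (Set.Ioc s t) := Set.Iic_disjoint_Ioc le_rfl
  have hm : gaussianReal 0 1 (Set.Iic t)
      = gaussianReal 0 1 (Set.Iic s) + gaussianReal 0 1 (Set.Ioc s t) := by
    rw [← hunion, measure_union hdisj measurableSet_Ioc]
  have hpos : 0 < gaussianReal 0 1 (Set.Ioc s t) := by
    rw [pos_iff_ne_zero]
    intro h0
    have := gaussianReal_absolutelyContinuous' 0 one_ne_zero h0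
    rw [Real.volume_Ioc] at this
    simp only [ENNReal.ofReal_eq_zero, sub_nonpos] at this
    linarith
  have hlt : gaussianReal 0 1 (Set.Iic s) < gaussianReal 0 1 (Set.Iic t) := by
    rw [hm]
    exact ENNReal.lt_add_right (measure_ne_top _ _) hpos.ne'
  exact ENNReal.toReal_lt_toReal (measure_ne_top _ _) (measure_ne_top _ _) |>.mpr hlt

lemma stdGaussianCDF_neg (t : ℝ) : stdGaussianCDF (-t) = 1 - stdGaussianCDF t := by
  have hmap : Measure.map (fun x => (-1:ℝ) * x) (gaussianReal 0 1) = gaussianReal 0 1 := by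
    rw [gaussianReal_map_const_mul]
    norm_num
  have h1 : gaussianReal 0 1 (Set.Iic (-t)) = gaussianReal 0 1 (Set.Ici t) := by
    conv_lhs => rw [← hmap]
    rw [Measure.map_apply (show Measurable fun x : ℝ => (-1:ℝ) * x by fun_prop) measurableSet_Iic]
    congr 1
    ext x
    simp only [Set.mem_preimage, Set.mem_Iic, Set.mem_Ici]
    constructor <;> intro <;> linarith
  have hsing : gaussianReal 0 1 {t} = 0 :=
    gaussianReal_absolutelyContinuous 0 one_ne_zero (Real.volume_singleton)
  have h2 : gaussianReal 0 1 (Set.Ici t) = gaussianReal 0 1 (Set.Ioi t) :=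
    (measure_congr (Ioi_ae_eq_Ici' hsing)).symm
  have h3 : gaussianReal 0 1 (Set.Iic t) + gaussianReal 0 1 (Set.Ioi t) = 1 := by
    rw [← measure_union (Set.Iic_disjoint_Ioi le_rfl) measurableSet_Ioi, Set.Iic_union_Ioi,
      measure_univ]
  have h4 : (gaussianReal 0 1 (Set.Iic t)).toReal + (gaussianReal 0 1 (Set.Ioi t)).toReal = 1 := by
    rw [← ENNReal.toReal_add (measure_ne_top _ _) (measure_ne_top _ _), h3, ENNReal.toReal_one]
  rw [stdGaussianCDF, stdGaussianCDF, h1, h2]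
  linarith

lemma stdGaussianCDF_zero : stdGaussianCDF 0 = 1 / 2 := by
  have := stdGaussianCDF_neg 0
  rw [neg_zero] at this
  linarith

lemma tendsto_stdGaussianCDF_atTop : Tendsto stdGaussianCDF atTop (𝓝 1) := by
  have h := tendsto_measure_Iic_atTop (gaussianReal 0 1)
  rw [measure_univ] at h
  have := (ENNReal.tendsto_toReal (by norm_num : (1:ℝ≥0∞) ≠ ⊤)).comp h
  exact this

lemma tendsto_stdGaussianCDF_atBot : Tendsto stdGaussianCDF atBot (𝓝 0) := by
  have he : stdGaussianCDF = fun t => 1 - stdGaussianCDF (-t) := by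
    funext t
    rw [stdGaussianCDF_neg]
    ring
  rw [he]
  have h1 : Tendsto (fun t : ℝ => stdGaussianCDF (-t)) atBot (𝓝 1) :=
    tendsto_stdGaussianCDF_atTop.comp tendsto_neg_atBot_atTop
  have := tendsto_const_nhds (x := (1:ℝ)) (f := atBot (α := ℝ)) |>.sub h1
  simpa using this

lemma stdGaussianCDF_quantile {q : ℝ} (hq0 : 0 < q) (hq1 : q < 1) :
    stdGaussianCDF (stdGaussianQuantile q) = q := by
  obtain ⟨a, ha⟩ : ∃ a, stdGaussianCDF a < q :=
    (tendsto_stdGaussianCDF_atBot.eventually_lt_const hq0).exists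
  obtain ⟨b, hb⟩ : ∃ b, q < stdGaussianCDF b :=
    (tendsto_stdGaussianCDF_atTop.eventually_const_lt hq1).exists
  obtain ⟨t₀, ht₀⟩ : q ∈ Set.range stdGaussianCDF :=
    intermediate_value_univ a b continuous_stdGaussianCDF ⟨ha.le, hb.le⟩
  have hset : {t : ℝ | q ≤ stdGaussianCDF t} = Set.Ici t₀ := by
    ext t
    simp only [Set.mem_setOf_eq, Set.mem_Ici, ← ht₀]
    exact strictMono_stdGaussianCDF.le_iff_le
  rw [stdGaussianQuantile, hset, csInf_Ici, ht₀]

lemma gaussianReal_Iic_toReal (a v t : ℝ) (hv : 0 < v) :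
    ((gaussianReal a (Real.toNNReal v)) (Set.Iic t)).toReal
      = stdGaussianCDF ((t - a) / Real.sqrt v) := by
  set σ := Real.sqrt v with hσdef
  have hσ : 0 < σ := Real.sqrt_pos.mpr hv
  have hmap : Measure.map (fun x : ℝ => σ * x + a) (gaussianReal 0 1)
      = gaussianReal a (Real.toNNReal v) := by
    have hcomp : (fun x : ℝ => σ * x + a) = (fun y => y + a) ∘ (fun x => σ * x) := rfl
    rw [hcomp, ← Measure.map_map (measurable_add_const a)
      (show Measurable fun x : ℝ => σ * x by fun_prop),
      gaussianReal_map_const_mul, gaussianReal_map_add_const]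
    congr 1
    · ring
    · rw [mul_one]
      apply NNReal.coe_injective
      simp [hσdef, Real.sq_sqrt hv.le, Real.coe_toNNReal _ hv.le]
  rw [← hmap, Measure.map_apply (show Measurable fun x : ℝ => σ * x + a by fun_prop)
    measurableSet_Iic]
  have hpre : (fun x : ℝ => σ * x + a) ⁻¹' Set.Iic t = Set.Iic ((t - a) / σ) := by
    ext x
    simp only [Set.mem_preimage, Set.mem_Iic]
    rw [le_div_iff₀ hσ]
    constructor <;> intro <;> nlinarith [mul_comm x σ]
  rw [hpre]
  rfl

open scoped MatrixOrder in
lemma quad_cauchySchwarz {d : ℕ} {S : Matrix (Fin d) (Fin d) ℝ} (hS : S.PosSemidef)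
    (a b : Fin d → ℝ) :
    |dotProduct a (S.mulVec b)| ≤
      Real.sqrt (dotProduct a (S.mulVec a)) *
        Real.sqrt (dotProduct b (S.mulVec b)) := by
  obtain ⟨B, hB⟩ := CStarAlgebra.nonneg_iff_eq_star_mul_self.mp hS.nonneg
  have hkey : ∀ x y : Fin d → ℝ,
      dotProduct x (S.mulVec y) = dotProduct (B.mulVec x) (B.mulVec y) := by
    intro x y
    rw [hB, ← Matrix.mulVec_mulVec, Matrix.dotProduct_mulVec, ← Matrix.mulVec_transpose]
    simp [Matrix.star_eq_conjTranspose, Matrix.conjTranspose_eq_transpose_of_trivial]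
  have hinner : ∀ x y : Fin d → ℝ,
      dotProduct x y
        = ⟪(WithLp.equiv 2 (Fin d → ℝ)).symm x, (WithLp.equiv 2 (Fin d → ℝ)).symm y⟫ := by
    intro x y
    simp [PiLp.inner_apply, RCLike.inner_apply, dotProduct, mul_comm]
  rw [hkey a b, hkey a a, hkey b b, hinner, hinner, hinner]
  set P := (WithLp.equiv 2 (Fin d → ℝ)).symm (B.mulVec a)
  set Q := (WithLp.equiv 2 (Fin d → ℝ)).symm (B.mulVec b)
  have hcs := real_inner_mul_inner_self_le P Q
  have h1 : |⟪P, Q⟫| = Real.sqrt (⟪P, Q⟫ * ⟪P, Q⟫) := by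
    rw [← Real.sqrt_mul_self_eq_abs]
  rw [h1, ← Real.sqrt_mul real_inner_self_nonneg]
  exact Real.sqrt_le_sqrt hcs


theorem stmt_17 (d : ℕ)
    (m : EuclideanSpace ℝ (Fin d)) (S : Matrix (Fin d) (Fin d) ℝ) (hS : S.PosDef)
    (μ : Measure (EuclideanSpace ℝ (Fin d))) [IsProbabilityMeasure μ]
    -- `μ = N(m, Σ)`: every one-dimensional projection is Gaussian
    (hμ : ∀ u : EuclideanSpace ℝ (Fin d),
      Measure.map (fun x => ⟪u, x⟫) μ =
        gaussianReal ⟪u, m⟫ (Real.toNNReal (quadForm d S u)))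
    (α : ℝ) (hα : α ∈ Set.Ioc (0 : ℝ) (1 / 2)) :
    ∀ u ∈ Metric.sphere (0 : EuclideanSpace ℝ (Fin d)) 1,
      sSup ((fun x => ⟪u, x⟫) '' hdRegion d μ α) =
        ⟪u, m⟫ + stdGaussianQuantile (1 - α) * Real.sqrt (quadForm d S u) := by
  intro u hu
  obtain ⟨hα0, hα2⟩ := hα
  have hu1 : ‖u‖ = 1 := by simpa using hu
  have hune : u ≠ 0 := by intro h; rw [h] at hu1; simp at hu1
  set c := stdGaussianQuantile (1 - α) with hcdef
  have hΦc : stdGaussianCDF c = 1 - α :=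
    stdGaussianCDF_quantile (by linarith) (by linarith)
  have hc0 : 0 ≤ c := by
    by_contra h
    push_neg at h
    have := strictMono_stdGaussianCDF h
    rw [hΦc, stdGaussianCDF_zero] at this
    linarith
  have hquad : ∀ v : EuclideanSpace ℝ (Fin d), v ≠ 0 → 0 < quadForm d S v := by
    intro v hv
    have hv' : (fun i => v i) ≠ 0 := by
      intro h
      apply hv
      ext i
      exact congrFun h i
    have := hS.dotProduct_mulVec_pos hv'
    simpa [quadForm] using this
  have hproj : ∀ (v : EuclideanSpace ℝ (Fin d)), v ≠ 0 → ∀ x : EuclideanSpace ℝ (Fin d),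
      (μ {y | ⟪v, y⟫ ≤ ⟪v, x⟫}).toReal
        = stdGaussianCDF ((⟪v, x⟫ - ⟪v, m⟫) / Real.sqrt (quadForm d S v)) := by
    intro v hv x
    have hmeas : Measurable fun y : EuclideanSpace ℝ (Fin d) => ⟪v, y⟫ :=
      (continuous_const.inner continuous_id).measurable
    have hset : {y : EuclideanSpace ℝ (Fin d) | ⟪v, y⟫ ≤ ⟪v, x⟫}
        = (fun y => ⟪v, y⟫) ⁻¹' Set.Iic ⟪v, x⟫ := rfl
    rw [hset, ← Measure.map_apply hmeas measurableSet_Iic, hμ v,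
      gaussianReal_Iic_toReal _ _ _ (hquad v hv)]
  have hsphne : Nonempty (Metric.sphere (0 : EuclideanSpace ℝ (Fin d)) 1) := ⟨⟨u, hu⟩⟩
  have hvne : ∀ v : Metric.sphere (0 : EuclideanSpace ℝ (Fin d)) 1,
      (v : EuclideanSpace ℝ (Fin d)) ≠ 0 := by
    intro v h
    have hv2 := v.2
    rw [h] at hv2
    simp at hv2
  have hmem : ∀ x, x ∈ hdRegion d μ α ↔
      ∀ v : Metric.sphere (0 : EuclideanSpace ℝ (Fin d)) 1,
        α ≤ stdGaussianCDF ((⟪(v : EuclideanSpace ℝ (Fin d)), x⟫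
            - ⟪(v : EuclideanSpace ℝ (Fin d)), m⟫)
          / Real.sqrt (quadForm d S (v : EuclideanSpace ℝ (Fin d)))) := by
    intro x
    rw [hdRegion, Set.mem_setOf_eq, halfspaceDepth,
      le_ciInf_iff ⟨0, fun r hr => by obtain ⟨v, rfl⟩ := hr; exact ENNReal.toReal_nonneg⟩]
    exact forall_congr' fun v => by rw [hproj v (hvne v) x]
  set σ := Real.sqrt (quadForm d S u) with hσdef
  have hσ : 0 < σ := Real.sqrt_pos.mpr (hquad u hune)
  have hub : ∀ x ∈ hdRegion d μ α, ⟪u, x⟫ ≤ ⟪u, m⟫ + c * σ := by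
    intro x hx
    have hnegu : (-u : EuclideanSpace ℝ (Fin d)) ∈
        Metric.sphere (0 : EuclideanSpace ℝ (Fin d)) 1 := by
      simp [mem_sphere_zero_iff_norm, hu1]
    have h := (hmem x).mp hx ⟨-u, hnegu⟩
    have hqneg : quadForm d S (-u) = quadForm d S u := by
      have he : (fun i => (-u : EuclideanSpace ℝ (Fin d)) i) = -(fun i => u i) := rfl
      rw [quadForm, he, Matrix.mulVec_neg, dotProduct_neg, neg_dotProduct, neg_neg,
        quadForm]
    simp only [inner_neg_left] at h
    rw [hqneg] at h
    have harg : (-⟪u, x⟫ - -⟪u, m⟫) / σ = -((⟪u, x⟫ - ⟪u, m⟫) / σ) := by ring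
    rw [harg, stdGaussianCDF_neg] at h
    have hle : (⟪u, x⟫ - ⟪u, m⟫) / σ ≤ c := by
      apply strictMono_stdGaussianCDF.le_iff_le.mp
      rw [hΦc]
      linarith
    rw [div_le_iff₀ hσ] at hle
    nlinarith
  set w : Fin d → ℝ := S.mulVec (fun i => u i) with hwdef
  set xstar : EuclideanSpace ℝ (Fin d) :=
    m + (c / σ) • (WithLp.equiv 2 (Fin d → ℝ)).symm w with hxsdef
  have hinner_w : ∀ v : EuclideanSpace ℝ (Fin d),
      ⟪v, (WithLp.equiv 2 (Fin d → ℝ)).symm w⟫ = dotProduct (fun i => v i) w := by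
    intro v
    simp [PiLp.inner_apply, RCLike.inner_apply, dotProduct, mul_comm]
  have hxstar_inner : ∀ v : EuclideanSpace ℝ (Fin d),
      ⟪v, xstar⟫ = ⟪v, m⟫ + (c / σ) * dotProduct (fun i => v i) w := by
    intro v
    rw [hxsdef, inner_add_right, real_inner_smul_right, hinner_w]
  have hqu : dotProduct (fun i => u i) w = σ * σ := by
    rw [hσdef, Real.mul_self_sqrt (hquad u hune).le]
    rfl
  have hx1 : ⟪u, xstar⟫ = ⟪u, m⟫ + c * σ := by
    rw [hxstar_inner u, hqu]
    field_simp
  have hx2 : xstar ∈ hdRegion d μ α := by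
    rw [hmem]
    intro v
    have hv0 := hvne v
    set σv := Real.sqrt (quadForm d S (v : EuclideanSpace ℝ (Fin d))) with hσvdef
    have hσv : 0 < σv := Real.sqrt_pos.mpr (hquad _ hv0)
    have hcs := quad_cauchySchwarz hS.posSemidef
      (fun i => (v : EuclideanSpace ℝ (Fin d)) i) (fun i => u i)
    set dp := dotProduct (fun i => (v : EuclideanSpace ℝ (Fin d)) i) w with hdpdef
    have hlow : -(σv * σ) ≤ dp := by
      have hna := neg_abs_le dp
      have : |dp| ≤ σv * σ := hcs
      linarith
    have harg : -c ≤ (⟪(v : EuclideanSpace ℝ (Fin d)), xstar⟫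
        - ⟪(v : EuclideanSpace ℝ (Fin d)), m⟫) / σv := by
      rw [hxstar_inner, ← hdpdef]
      have hc' : 0 ≤ c / σ := div_nonneg hc0 hσ.le
      have hmul : (c / σ) * (-(σv * σ)) ≤ (c / σ) * dp :=
        mul_le_mul_of_nonneg_left hlow hc'
      have heq : (c / σ) * (-(σv * σ)) = -c * σv := by
        field_simp
      rw [le_div_iff₀ hσv]
      calc -c * σv = (c / σ) * (-(σv * σ)) := heq.symm
        _ ≤ (c / σ) * dp := hmul
        _ = (⟪(v : EuclideanSpace ℝ (Fin d)), m⟫ + (c / σ) * dp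
            - ⟪(v : EuclideanSpace ℝ (Fin d)), m⟫) := by ring
    calc α = 1 - stdGaussianCDF c := by linarith
      _ = stdGaussianCDF (-c) := (stdGaussianCDF_neg c).symm
      _ ≤ _ := strictMono_stdGaussianCDF.monotone harg
  have hne : ((fun x => ⟪u, x⟫) '' hdRegion d μ α).Nonempty := ⟨⟪u, xstar⟫, xstar, hx2, rfl⟩
  have hubs : ∀ r ∈ (fun x => ⟪u, x⟫) '' hdRegion d μ α, r ≤ ⟪u, m⟫ + c * σ := by
    rintro r ⟨x, hx, rfl⟩
    exact hub x hx
  apply le_antisymm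
  · exact csSup_le hne hubs
  · rw [← hx1]
    exact le_csSup ⟨⟪u, m⟫ + c * σ, hubs⟩ ⟨xstar, hx2, rfl⟩
end
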